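/- Let a, b, c be coprime positive integers with min{a,b,c} > 1. If (x,y,z) and (x',y',z') are two positive integer solutions of a^x + b^y = c^z with x > x' and z < z', then a^(x') < b^(y') and 0 < log c / log b − y'/z' < 2/(z' · a · c · log b). -/

import Mathlib

set_option maxHeartbeats 1000000 in
theorem stmt_12 (a b c x y z x' y' z' : ℕ)
    (ha : 1 < a) (hb : 1 < b) (hc : 1 < c)
    (hab : Nat.Coprime a b) (hbc : Nat.Coprime b c) (hac : Nat.Coprime a c)
    (hx : 0 < x) (hy : 0 < y) (hz : 0 < z)
    (hx' : 0 < x') (hy' : 0 < y') (hz' : 0 < z')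
    (heq : a ^ x + b ^ y = c ^ z) (heq' : a ^ x' + b ^ y' = c ^ z')
    (hxx : x > x') (hzz : z < z') :
    a ^ x' < b ^ y' ∧
    0 < Real.log c / Real.log b - (y' : ℝ) / z' ∧
    Real.log c / Real.log b - (y' : ℝ) / z' <
      2 / ((z' : ℝ) * a * c * Real.log b) := by
  -- basic nat facts
  have haxx : a ^ x' < a ^ x := Nat.pow_lt_pow_right ha hxx
  have hczz : c ^ z < c ^ z' := Nat.pow_lt_pow_right hc hzz
  have hby : b ^ y < b ^ y' := by omega
  have hyy : y < y' := (Nat.pow_lt_pow_iff_right hb).mp hby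
  -- integer divisibility
  have h1 : ((a:ℤ))^x + (b:ℤ)^y = (c:ℤ)^z := by exact_mod_cast heq
  have h2 : ((a:ℤ))^x' + (b:ℤ)^y' = (c:ℤ)^z' := by exact_mod_cast heq'
  have ex : (a:ℤ)^x = (a:ℤ)^x' * (a:ℤ)^(x-x') := by
    rw [← pow_add]; congr 1; omega
  have ey : (b:ℤ)^y' = (b:ℤ)^y * (b:ℤ)^(y'-y) := by
    rw [← pow_add]; congr 1; omega
  have ez : (c:ℤ)^z' = (c:ℤ)^z * (c:ℤ)^(z'-z) := by
    rw [← pow_add]; congr 1; omega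
  rw [ex] at h1
  rw [ey, ez] at h2
  have hident : (a:ℤ)^x' * (b:ℤ)^y * ((a:ℤ)^(x-x') * (b:ℤ)^(y'-y) - 1)
      = (c:ℤ)^z * ((a:ℤ)^x' * (a:ℤ)^(x-x') * (c:ℤ)^(z'-z) - (a:ℤ)^x') := by
    have hb' : (b:ℤ)^y = (c:ℤ)^z - (a:ℤ)^x' * (a:ℤ)^(x-x') := by linarith
    have hbb' : (b:ℤ)^y * (b:ℤ)^(y'-y) = (c:ℤ)^z * (c:ℤ)^(z'-z) - (a:ℤ)^x' := by
      linarith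
    calc (a:ℤ)^x' * (b:ℤ)^y * ((a:ℤ)^(x-x') * (b:ℤ)^(y'-y) - 1)
        = (a:ℤ)^x' * (a:ℤ)^(x-x') * ((b:ℤ)^y * (b:ℤ)^(y'-y))
          - (a:ℤ)^x' * (b:ℤ)^y := by ring
      _ = (a:ℤ)^x' * (a:ℤ)^(x-x') * ((c:ℤ)^z * (c:ℤ)^(z'-z) - (a:ℤ)^x')
          - (a:ℤ)^x' * ((c:ℤ)^z - (a:ℤ)^x' * (a:ℤ)^(x-x')) := by rw [hbb', hb']
      _ = (c:ℤ)^z * ((a:ℤ)^x' * (a:ℤ)^(x-x') * (c:ℤ)^(z'-z) - (a:ℤ)^x') := by ring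
  have hcop : IsCoprime ((c:ℤ)^z) ((a:ℤ)^x' * (b:ℤ)^y) := by
    have hn : Nat.Coprime (c^z) (a^x' * b^y) :=
      Nat.Coprime.mul_right (Nat.Coprime.pow _ _ hac.symm) (Nat.Coprime.pow _ _ hbc.symm)
    have := Nat.isCoprime_iff_coprime.mpr hn
    push_cast at this
    exact this
  have hdvd : (c:ℤ)^z ∣ (a:ℤ)^(x-x') * (b:ℤ)^(y'-y) - 1 := by
    apply hcop.dvd_of_dvd_mul_left
    exact ⟨_, hident⟩
  have ha2 : (2:ℤ) ≤ (a:ℤ)^(x-x') := by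
    calc (2:ℤ) ≤ (a:ℤ) := by exact_mod_cast ha
    _ = (a:ℤ)^1 := (pow_one _).symm
    _ ≤ (a:ℤ)^(x-x') := pow_le_pow_right₀ (by exact_mod_cast ha.le) (by omega)
  have hb1 : (1:ℤ) ≤ (b:ℤ)^(y'-y) := one_le_pow₀ (by exact_mod_cast hb.le)
  have hpos : (0:ℤ) < (a:ℤ)^(x-x') * (b:ℤ)^(y'-y) - 1 := by nlinarith
  have hle : (c:ℤ)^z ≤ (a:ℤ)^(x-x') * (b:ℤ)^(y'-y) - 1 := Int.le_of_dvd hpos hdvd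
  have hnat : c^z < a^(x-x') * b^(y'-y) := by
    have h3 : ((c^z : ℕ) : ℤ) < ((a^(x-x') * b^(y'-y) : ℕ) : ℤ) := by
      push_cast; linarith
    exact_mod_cast h3
  have hby0 : 0 < b^y := pow_pos (by omega) y
  have haxcz : a^x < c^z := by omega
  have hpart1' : a ^ x' < b ^ (y'-y) := by
    have h3 : a^(x-x') * a^x' < a^(x-x') * b^(y'-y) := by
      calc a^(x-x') * a^x' = a^x := by rw [← pow_add]; congr 1; omega
      _ < c^z := haxcz
      _ < _ := hnat
    exact Nat.lt_of_mul_lt_mul_left h3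
  have hpart1 : a ^ x' < b ^ y' := by
    calc a^x' < b^(y'-y) := hpart1'
    _ ≤ b^y' := Nat.pow_le_pow_right (by omega) (by omega)
  -- nat bound for upper estimate
  have hkey : a^(x'+1) * c ≤ c^z' := by
    calc a^(x'+1) * c ≤ a^x * c :=
          Nat.mul_le_mul_right _ (Nat.pow_le_pow_right (by omega) (by omega))
    _ ≤ c^z * c := Nat.mul_le_mul_right _ haxcz.le
    _ = c^(z+1) := by rw [pow_succ]
    _ ≤ c^z' := Nat.pow_le_pow_right (by omega) (by omega)
  -- real part
  have hb1R : (1:ℝ) < b := by exact_mod_cast hb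
  have hc1R : (1:ℝ) < c := by exact_mod_cast hc
  have ha0R : (0:ℝ) < a := by positivity
  have hlb : 0 < Real.log b := Real.log_pos hb1R
  have hz'R : (0:ℝ) < z' := by exact_mod_cast hz'
  have hA : (0:ℝ) < (a:ℝ)^x' := by positivity
  have hB : (0:ℝ) < (b:ℝ)^y' := by positivity
  have hCeq : (c:ℝ)^z' = (a:ℝ)^x' + (b:ℝ)^y' := by
    have h4 : ((a^x' + b^y' : ℕ) : ℝ) = ((c^z' : ℕ) : ℝ) := by exact_mod_cast heq'
    push_cast at h4
    linarith
  have hABlt : (a:ℝ)^x' < (b:ℝ)^y' := by exact_mod_cast hpart1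
  have hmain : Real.log c / Real.log b - (y':ℝ)/z'
      = Real.log (1 + (a:ℝ)^x'/(b:ℝ)^y') / ((z':ℝ) * Real.log b) := by
    have e1 : (1 + (a:ℝ)^x'/(b:ℝ)^y') = ((c:ℝ)^z')/((b:ℝ)^y') := by
      rw [hCeq]; field_simp; ring
    rw [e1, Real.log_div (by positivity) hB.ne', Real.log_pow, Real.log_pow]
    field_simp
  have hABpos : (0:ℝ) < (a:ℝ)^x'/(b:ℝ)^y' := div_pos hA hB
  refine ⟨hpart1, ?_, ?_⟩
  · rw [hmain]
    apply div_pos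
    · apply Real.log_pos; linarith
    · positivity
  · rw [hmain]
    have h2' : Real.log (1 + (a:ℝ)^x'/(b:ℝ)^y') < 2/((a:ℝ)*c) := by
      have l1 : Real.log (1 + (a:ℝ)^x'/(b:ℝ)^y') < (a:ℝ)^x'/(b:ℝ)^y' := by
        have := Real.log_lt_sub_one_of_pos
          (show (0:ℝ) < 1 + (a:ℝ)^x'/(b:ℝ)^y' by linarith) (by linarith)
        linarith
      have l2 : (a:ℝ)^x'/(b:ℝ)^y' < 2*(a:ℝ)^x'/((c:ℝ)^z') := by
        rw [div_lt_div_iff₀ hB (by positivity), hCeq]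
        nlinarith
      have l3 : 2*(a:ℝ)^x'/((c:ℝ)^z') ≤ 2/((a:ℝ)*c) := by
        rw [div_le_div_iff₀ (by positivity) (by positivity)]
        have hck : ((a:ℝ)^(x'+1) * c) ≤ (c:ℝ)^z' := by exact_mod_cast hkey
        rw [pow_succ] at hck
        nlinarith
      linarith
    have hden : (0:ℝ) < (z':ℝ) * Real.log b := by positivity
    calc Real.log (1 + (a:ℝ)^x'/(b:ℝ)^y') / ((z':ℝ) * Real.log b)
        < (2/((a:ℝ)*c)) / ((z':ℝ) * Real.log b) := by
          exact (div_lt_div_iff_of_pos_right hden).mpr h2'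
    _ = 2 / ((z':ℝ) * a * c * Real.log b) := by
          rw [div_div]; congr 1; ring
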